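/- Let R be a commutative ring, 𝔗 a torsion theory over R, 𝔞 a finitely generated ideal of R, and M an R-module. Then 𝔗-cgrade_R(𝔞,M) ≤ 𝔗-Kgrade_R(𝔞,M), i.e., the length of any weak M-regular sequence with respect to 𝔗 consisting of elements of 𝔞 is at most 𝔗-Kgrade_R(𝔞,M). -/

import Mathlib

open CategoryTheory

universe u

noncomputable section

/-- A torsion theory over `R`: a class of `R`-modules closed under isomorphism, submodules,
quotient modules, extensions, and directed colimits (formulated as closure under directed
unions of submodules). -/
structure IsTorsionTheory (R : Type u) [CommRing R] (T : Set (ModuleCat.{u} R)) : Prop where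
  mem_of_iso : ∀ {N N' : ModuleCat.{u} R}, (N ≅ N') → N ∈ T → N' ∈ T
  submodule_mem : ∀ {N : ModuleCat.{u} R}, N ∈ T → ∀ S : Submodule R N,
    ModuleCat.of R S ∈ T
  quotient_mem : ∀ {N : ModuleCat.{u} R}, N ∈ T → ∀ S : Submodule R N,
    ModuleCat.of R (N ⧸ S) ∈ T
  ext_mem : ∀ {N : ModuleCat.{u} R} (S : Submodule R N),
    ModuleCat.of R S ∈ T → ModuleCat.of R (N ⧸ S) ∈ T → N ∈ T
  directed_mem : ∀ {N : ModuleCat.{u} R} {ι : Type u} [Nonempty ι] (S : ι → Submodule R N),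
    Directed (· ≤ ·) S → (∀ i, ModuleCat.of R (S i) ∈ T) → iSup S = ⊤ → N ∈ T

variable {R : Type u} [CommRing R]

/-- The "outgoing" differential of the Koszul cocomplex `Hom_R(K_•(x), M)`, whose degree `i`
component is indexed by the `i`-element subsets of `{1, …, r}`. -/
def koszulDiff {r : ℕ} (x : Fin r → R) (M : Type u) [AddCommGroup M] [Module R M] (i : ℕ) :
    ({s : Finset (Fin r) // s.card = i} → M) →ₗ[R]
      ({s : Finset (Fin r) // s.card = i + 1} → M) where
  toFun φ t := ∑ j ∈ t.1.attach,
    ((-1 : R) ^ (t.1.filter (fun k => k < j.1)).card * x j.1) •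
      φ ⟨t.1.erase j.1, by simp [Finset.card_erase_of_mem j.2, t.2]⟩
  map_add' φ ψ := by
    funext t
    simp [Finset.sum_add_distrib, smul_add]
  map_smul' c φ := by
    funext t
    simp [Finset.smul_sum, smul_comm c]

/-- The "incoming" differential of the Koszul cocomplex in degree `i`
(its source is trivial when `i = 0`). -/
def koszulDiffIn {r : ℕ} (x : Fin r → R) (M : Type u) [AddCommGroup M] [Module R M] (i : ℕ) :
    ({s : Finset (Fin r) // s.card + 1 = i} → M) →ₗ[R]
      ({s : Finset (Fin r) // s.card = i} → M) where
  toFun φ t := ∑ j ∈ t.1.attach,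
    ((-1 : R) ^ (t.1.filter (fun k => k < j.1)).card * x j.1) •
      φ ⟨t.1.erase j.1, by rw [Finset.card_erase_add_one j.2]; exact t.2⟩
  map_add' φ ψ := by
    funext t
    simp [Finset.sum_add_distrib, smul_add]
  map_smul' c φ := by
    funext t
    simp [Finset.smul_sum, smul_comm c]

/-- The `i`-th Koszul cohomology `H^i(x; M)` of `M` with respect to `x₁, …, x_r`, i.e. the
`i`-th cohomology of the cocomplex `Hom_R(K_•(x), M)`. -/
abbrev koszulCohomology {r : ℕ} (x : Fin r → R) (M : Type u) [AddCommGroup M] [Module R M]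
    (i : ℕ) : Type u :=
  ↥(LinearMap.ker (koszulDiff x M i)) ⧸
    (Submodule.comap (LinearMap.ker (koszulDiff x M i)).subtype
      (LinearMap.range (koszulDiffIn x M i)))

/-- The `𝔗`-Koszul grade of the ideal `(x₁, …, x_r)` on `M`: the infimum of the set of `i`
such that `H^i(x; M) ∉ 𝔗` (with `inf ∅ = +∞`). -/
def TKgrade (T : Set (ModuleCat.{u} R)) {r : ℕ} (x : Fin r → R) (M : Type u)
    [AddCommGroup M] [Module R M] : ℕ∞ :=
  sInf ((↑· : ℕ → ℕ∞) '' {i | ModuleCat.of R (koszulCohomology x M i) ∉ T})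

/-- `x₁, …, x_n` is a weak `M`-regular sequence with respect to `𝔗` if the module
`((x₁,…,x_{i-1})M :_M x_i) / (x₁,…,x_{i-1})M` belongs to `𝔗` for all `i = 1, …, n`. -/
def IsWeakRegularSeqWrt (T : Set (ModuleCat.{u} R)) {n : ℕ} (x : Fin n → R) (M : Type u)
    [AddCommGroup M] [Module R M] : Prop :=
  ∀ i : Fin n,
    ModuleCat.of R
      ↥(Submodule.map (Ideal.span (x '' {j | j < i}) • (⊤ : Submodule R M)).mkQ
        (Submodule.comap (LinearMap.lsmul R M (x i))
          (Ideal.span (x '' {j | j < i}) • (⊤ : Submodule R M)))) ∈ T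

/-- The `𝔗`-classical grade of `𝔞` on `M`: the supremum of the lengths of weak `M`-regular
sequences with respect to `𝔗` consisting of elements of `𝔞`. -/
def Tcgrade (T : Set (ModuleCat.{u} R)) (a : Ideal R) (M : Type u)
    [AddCommGroup M] [Module R M] : ℕ∞ :=
  sSup ((↑· : ℕ → ℕ∞) ''
    {n | ∃ x : Fin n → R, (∀ i, x i ∈ a) ∧ IsWeakRegularSeqWrt T x M})


section Aux

variable {T : Set (ModuleCat.{u} R)}

namespace TT

lemma memT_of_equiv (hT : IsTorsionTheory R T) {N N' : Type u} [AddCommGroup N] [Module R N]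
    [AddCommGroup N'] [Module R N'] (e : N ≃ₗ[R] N') (h : ModuleCat.of R N ∈ T) :
    ModuleCat.of R N' ∈ T :=
  hT.mem_of_iso e.toModuleIso h

lemma memT_of_surjective (hT : IsTorsionTheory R T) {N N' : Type u} [AddCommGroup N] [Module R N]
    [AddCommGroup N'] [Module R N'] (f : N →ₗ[R] N') (hf : Function.Surjective f)
    (h : ModuleCat.of R N ∈ T) : ModuleCat.of R N' ∈ T :=
  memT_of_equiv hT (f.quotKerEquivOfSurjective hf) (hT.quotient_mem h (LinearMap.ker f))

lemma memT_of_injective (hT : IsTorsionTheory R T) {N N' : Type u} [AddCommGroup N] [Module R N]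
    [AddCommGroup N'] [Module R N'] (f : N →ₗ[R] N') (hf : Function.Injective f)
    (h : ModuleCat.of R N' ∈ T) : ModuleCat.of R N ∈ T :=
  memT_of_equiv hT (LinearEquiv.ofInjective f hf).symm (hT.submodule_mem h (LinearMap.range f))

/-- `z` is a `𝔗`-torsion element. -/
def Tors (T : Set (ModuleCat.{u} R)) {N : Type u} [AddCommGroup N] [Module R N] (z : N) : Prop :=
  ModuleCat.of R ↥(Submodule.span R {z}) ∈ T

variable {N N' : Type u} [AddCommGroup N] [Module R N] [AddCommGroup N'] [Module R N']

lemma tors_of_mem (hT : IsTorsionTheory R T) {p : Submodule R N}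
    (hp : ModuleCat.of R ↥p ∈ T) {z : N} (hz : z ∈ p) : Tors T z := by
  have hle : Submodule.span R {z} ≤ p := by
    simpa [Submodule.span_le] using hz
  exact memT_of_injective hT (Submodule.inclusion hle) (Submodule.inclusion_injective hle) hp

lemma tors_of_map (hT : IsTorsionTheory R T) (f : N →ₗ[R] N') {z : N} (h : Tors T z) :
    Tors T (f z) := by
  have h2 : ModuleCat.of R ↥(Submodule.map f (Submodule.span R {z})) ∈ T :=
    memT_of_surjective hT (f.submoduleMap (Submodule.span R {z}))
      (LinearMap.submoduleMap_surjective f _) h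
  rwa [Submodule.map_span, Set.image_singleton] at h2

lemma tors_of_injective (hT : IsTorsionTheory R T) {f : N →ₗ[R] N'} (hf : Function.Injective f)
    {z : N} (h : Tors T (f z)) : Tors T z := by
  have hle : ∀ w ∈ Submodule.span R {z}, f w ∈ Submodule.span R {f z} := by
    intro w hw
    rw [← Set.image_singleton, ← Submodule.map_span]
    exact Submodule.mem_map_of_mem hw
  refine memT_of_injective hT (f.restrict hle) ?_ h
  intro a b hab
  exact Subtype.ext (hf (congrArg Subtype.val hab))

lemma tors_zero (hT : IsTorsionTheory R T) (hne : T.Nonempty) : Tors T (0 : N) := by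
  obtain ⟨N₀, hN₀⟩ := hne
  have h := hT.submodule_mem hN₀ ⊥
  refine memT_of_equiv hT (N := ↥(⊥ : Submodule R ↥N₀)) ?_ h
  rw [Submodule.span_zero_singleton]
  exact { toFun := 0, invFun := 0,
          map_add' := fun _ _ => Subsingleton.elim _ _,
          map_smul' := fun _ _ => Subsingleton.elim _ _,
          left_inv := fun a => Subsingleton.elim _ _,
          right_inv := fun a => Subsingleton.elim _ _ }

lemma sup_memT (hT : IsTorsionTheory R T) {p q : Submodule R N}
    (hp : ModuleCat.of R ↥p ∈ T) (hq : ModuleCat.of R ↥q ∈ T) :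
    ModuleCat.of R ↥(p ⊔ q) ∈ T := by
  refine hT.ext_mem (Submodule.comap (p ⊔ q).subtype p) ?_ ?_
  · exact memT_of_equiv hT (Submodule.comapSubtypeEquivOfLe (le_sup_left : p ≤ p ⊔ q)).symm hp
  · refine memT_of_surjective hT
      ((Submodule.comap (p ⊔ q).subtype p).mkQ.comp
        (Submodule.inclusion (le_sup_right : q ≤ p ⊔ q))) ?_ hq
    have hmk := Submodule.mkQ_surjective (Submodule.comap (p ⊔ q).subtype p)
    intro w
    obtain ⟨v, rfl⟩ := hmk w
    obtain ⟨a, ha, b, hb, hab⟩ := Submodule.mem_sup.1 v.2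
    refine ⟨⟨b, hb⟩, ?_⟩
    have : v - Submodule.inclusion (le_sup_right : q ≤ p ⊔ q) ⟨b, hb⟩ ∈
        Submodule.comap (p ⊔ q).subtype p := by
      have : (v : N) - b = a := by rw [← hab]; abel
      simpa [Submodule.mem_comap, this] using ha
    rw [LinearMap.comp_apply, ← sub_eq_zero, ← map_sub, Submodule.mkQ_apply, Submodule.Quotient.mk_eq_zero]
    have h3 := Submodule.neg_mem _ this
    simpa [Submodule.mem_comap, neg_sub] using h3

lemma tors_add (hT : IsTorsionTheory R T) {z w : N} (h1 : Tors T z) (h2 : Tors T w) :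
    Tors T (z + w) := by
  refine tors_of_mem hT (sup_memT hT h1 h2) ?_
  exact Submodule.add_mem _ (Submodule.mem_sup_left (Submodule.mem_span_singleton_self z))
    (Submodule.mem_sup_right (Submodule.mem_span_singleton_self w))

lemma tors_smul (hT : IsTorsionTheory R T) {z : N} (c : R) (h : Tors T z) : Tors T (c • z) :=
  tors_of_map hT (LinearMap.lsmul R N c) h

lemma tors_neg (hT : IsTorsionTheory R T) {z : N} (h : Tors T z) : Tors T (-z) := by
  have := tors_smul hT (-1 : R) h
  simpa using this

lemma tors_sum (hT : IsTorsionTheory R T) (hne : T.Nonempty) {ι : Type*} (s : Finset ι)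
    (f : ι → N) (h : ∀ i ∈ s, Tors T (f i)) : Tors T (∑ i ∈ s, f i) := by
  classical
  induction s using Finset.induction_on with
  | empty => simpa using tors_zero hT hne
  | insert _ _ hnotmem ih =>
    rename_i a s
    rw [Finset.sum_insert hnotmem]
    exact tors_add hT (h a (Finset.mem_insert_self a s))
      (ih fun i hi => h i (Finset.mem_insert_of_mem hi))

lemma memT_iff_forall_tors (hT : IsTorsionTheory R T) {N : Type u} [AddCommGroup N]
    [Module R N] : ModuleCat.of R N ∈ T ↔ ∀ z : N, Tors T z := by
  constructor
  · intro h z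
    refine tors_of_mem hT (p := ⊤) ?_ Submodule.mem_top
    exact memT_of_equiv hT (Submodule.topEquiv).symm h
  · intro h
    classical
    have hfin : ∀ s : Finset N, ModuleCat.of R ↥(Submodule.span R (s : Set N)) ∈ T := by
      intro s
      induction s using Finset.induction_on with
      | empty =>
        have h0 := h 0
        unfold Tors at h0
        rw [Submodule.span_zero_singleton] at h0
        rw [Finset.coe_empty, Submodule.span_empty]
        exact h0
      | insert _ _ hnotmem ih =>
        rename_i a s
        rw [Finset.coe_insert, Submodule.span_insert]
        exact sup_memT hT (h a) ih
    refine hT.directed_mem (N := ModuleCat.of R N) (ι := Finset N)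
      (fun s => Submodule.span R (s : Set N)) ?_ hfin ?_
    · intro s t
      exact ⟨s ∪ t, Submodule.span_mono (by simp), Submodule.span_mono (by simp)⟩
    · rw [Submodule.eq_top_iff']
      intro z
      refine Submodule.mem_iSup_of_mem {z} ?_
      simp [Submodule.mem_span_singleton_self]

lemma tors_pi (hT : IsTorsionTheory R T) (hne : T.Nonempty) {ι : Type} [Fintype ι]
    [DecidableEq ι] (θ : ι → N) (h : ∀ i, Tors T (θ i)) : Tors T θ := by
  have : θ = ∑ i : ι, Pi.single i (θ i) := (Finset.univ_sum_single θ).symm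
  rw [this]
  refine tors_sum hT hne _ _ ?_
  intro i _
  exact tors_of_map hT (LinearMap.single R (fun _ : ι => N) i) (h i)

lemma tors_of_ideal (hT : IsTorsionTheory R T) {H : Type u} [AddCommGroup H] [Module R H]
    (z : H) (J : Ideal R) (hJ : ModuleCat.of R (R ⧸ J) ∈ T)
    (hz : ∀ c ∈ J, Tors T (c • z)) : Tors T z := by
  classical
  set S : Submodule R H := Submodule.span R {z} with hS
  set f : R →ₗ[R] H := LinearMap.toSpanSingleton R H z with hf
  set U : Submodule R H := Submodule.map f J with hU
  have hUS : U ≤ S := by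
    rintro u ⟨c, hc, rfl⟩
    rw [hS]
    refine Submodule.mem_span_singleton.2 ⟨c, ?_⟩
    rw [hf, LinearMap.toSpanSingleton_apply]
  have hUmem : ModuleCat.of R ↥U ∈ T := by
    rw [memT_iff_forall_tors hT]
    rintro ⟨u, hu⟩
    obtain ⟨c, hc, rfl⟩ := hu
    refine tors_of_injective hT (Submodule.injective_subtype U) ?_
    show Tors T (f c)
    rw [hf, LinearMap.toSpanSingleton_apply]
    exact hz c hc
  show ModuleCat.of R ↥S ∈ T
  refine hT.ext_mem (Submodule.comap S.subtype U) ?_ ?_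
  · exact memT_of_equiv hT (Submodule.comapSubtypeEquivOfLe hUS).symm hUmem
  · have hmem0 : ∀ c : R, f c ∈ S := by
      intro c
      rw [hS]
      refine Submodule.mem_span_singleton.2 ⟨c, ?_⟩
      rw [hf, LinearMap.toSpanSingleton_apply]
    set f0 : R →ₗ[R] ↥S := LinearMap.codRestrict S f hmem0 with hf0
    have hker : J ≤ LinearMap.ker ((Submodule.comap S.subtype U).mkQ.comp f0) := by
      intro c hc
      rw [LinearMap.mem_ker, LinearMap.comp_apply, Submodule.mkQ_apply,
        Submodule.Quotient.mk_eq_zero, Submodule.mem_comap]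
      exact ⟨c, hc, rfl⟩
    refine memT_of_surjective hT
      (Submodule.liftQ J ((Submodule.comap S.subtype U).mkQ.comp f0) hker) ?_ hJ
    intro q
    obtain ⟨v, rfl⟩ := Submodule.Quotient.mk_surjective _ q
    obtain ⟨c, hc⟩ : ∃ c : R, f0 c = v := by
      obtain ⟨a, ha⟩ := Submodule.mem_span_singleton.1 v.2
      exact ⟨a, Subtype.ext (by
        simpa [hf0, hf, LinearMap.codRestrict_apply, LinearMap.toSpanSingleton_apply] using ha)⟩
    refine ⟨Submodule.Quotient.mk c, ?_⟩
    rw [Submodule.liftQ_apply, LinearMap.comp_apply, hc]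
    rfl

end TT

end Aux


namespace KZ

variable {r : ℕ}

/-- The sign `(-1)^{#{k ∈ t : k < j}}`. -/
def sgn (t : Finset (Fin r)) (j : Fin r) : R :=
  (-1 : R) ^ ((t.filter (fun k => k < j)).card)

variable {M : Type u} [AddCommGroup M] [Module R M]

/-- Total-function version of the Koszul differential. -/
def kD (x : Fin r → R) (G : Finset (Fin r) → M) (t : Finset (Fin r)) : M :=
  ∑ j ∈ t, (sgn t j * x j) • G (t.erase j)

lemma sgn_erase_of_lt {t : Finset (Fin r)} {k j : Fin r} (hk : k ∈ t) (hkj : k < j) :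
    sgn (R := R) t j = - sgn (t.erase k) j := by
  have hmem : k ∈ t.filter (fun m => m < j) := Finset.mem_filter.2 ⟨hk, hkj⟩
  have hc : ((t.erase k).filter (fun m => m < j)).card + 1 = (t.filter (fun m => m < j)).card := by
    rw [Finset.filter_erase]
    exact Finset.card_erase_add_one hmem
  unfold sgn
  rw [← hc, pow_succ]
  ring

lemma sgn_erase_of_not_lt {t : Finset (Fin r)} {k j : Fin r} (hkj : ¬ k < j) :
    sgn (R := R) (t.erase k) j = sgn t j := by
  unfold sgn
  rw [Finset.filter_erase, Finset.erase_eq_of_notMem (by simp [Finset.mem_filter, hkj])]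

lemma sgn_insert_of_not_lt {t : Finset (Fin r)} {a j : Fin r} (haj : ¬ a < j) :
    sgn (R := R) (insert a t) j = sgn t j := by
  unfold sgn
  rw [Finset.filter_insert, if_neg haj]

lemma sgn_insert_of_lt {t : Finset (Fin r)} {a j : Fin r} (ha : a ∉ t) (haj : a < j) :
    sgn (R := R) (insert a t) j = - sgn t j := by
  unfold sgn
  rw [Finset.filter_insert, if_pos haj,
    Finset.card_insert_of_notMem (by simp [Finset.mem_filter, ha]), pow_succ]
  ring

lemma sgn_mul_self (t : Finset (Fin r)) (j : Fin r) : sgn (R := R) t j * sgn t j = 1 := by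
  unfold sgn
  rw [← pow_add]
  exact Even.neg_one_pow ⟨_, rfl⟩

lemma kD_congr {x : Fin r → R} {G G' : Finset (Fin r) → M} {t : Finset (Fin r)}
    (h : ∀ j ∈ t, G (t.erase j) = G' (t.erase j)) : kD x G t = kD x G' t :=
  Finset.sum_congr rfl fun j hj => by rw [h j hj]

lemma kD_kD (x : Fin r → R) (G : Finset (Fin r) → M) (t : Finset (Fin r)) :
    kD x (fun s => kD x G s) t = 0 := by
  classical
  unfold kD
  have step : ∀ j ∈ t,
      (sgn t j * x j) • ∑ k ∈ t.erase j, (sgn (t.erase j) k * x k) • G ((t.erase j).erase k)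
      = ∑ k ∈ t, (if k = j then 0 else
          ((sgn t j * x j) * (sgn (t.erase j) k * x k)) • G ((t.erase j).erase k)) := by
    intro j _
    rw [Finset.smul_sum, ← Finset.sum_erase t (a := j) (f := fun k => if k = j then (0 : M) else
          ((sgn t j * x j) * (sgn (t.erase j) k * x k)) • G ((t.erase j).erase k)) (by simp)]
    refine Finset.sum_congr rfl fun k hk => ?_
    rw [if_neg (Finset.mem_erase.1 hk).1, smul_smul]
  rw [Finset.sum_congr rfl step, ← Finset.sum_product']
  refine Finset.sum_involution (fun p _ => (p.2, p.1)) ?_ ?_ ?_ ?_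
  · rintro ⟨j, k⟩ hp
    simp only [Finset.mem_product] at hp
    by_cases hjk : k = j
    · simp [hjk]
    rw [if_neg hjk, if_neg (fun h => hjk h.symm)]
    have hsets : (t.erase j).erase k = (t.erase k).erase j := Finset.erase_right_comm
    rw [hsets, ← add_smul]
    convert zero_smul R _
    rcases lt_or_gt_of_ne (fun h => hjk (h.symm)) with hlt | hlt
    · -- j < k
      have h1 : sgn (R := R) (t.erase j) k = - sgn t k := by
        rw [sgn_erase_of_lt hp.1 hlt]; ring
      have h2 : sgn (R := R) (t.erase k) j = sgn t j := sgn_erase_of_not_lt (asymm hlt)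
      rw [h1, h2]; ring
    · -- k < j
      have h1 : sgn (R := R) (t.erase j) k = sgn t k := sgn_erase_of_not_lt (asymm hlt)
      have h2 : sgn (R := R) (t.erase k) j = - sgn t j := by
        rw [sgn_erase_of_lt hp.2 hlt]; ring
      rw [h1, h2]; ring
  · rintro ⟨j, k⟩ hp hne
    intro hcontr
    have : j = k := (Prod.ext_iff.1 hcontr.symm).1
    exact hne (by simp [this])
  · rintro ⟨j, k⟩ hp
    simp only [Finset.mem_product] at hp ⊢
    exact ⟨hp.2, hp.1⟩
  · rintro ⟨j, k⟩ _
    rfl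

/-- The contraction homotopy operator, total-function version. -/
def hop (S : Type u) [CommRing S] {r : ℕ} {M : Type u} [AddCommGroup M] [Module S M]
    (j₀ : Fin r) (G : Finset (Fin r) → M) (s : Finset (Fin r)) : M :=
  if j₀ ∈ s then 0 else sgn (R := S) s j₀ • G (insert j₀ s)

lemma hop_apply (S : Type u) [CommRing S] {r : ℕ} {M : Type u} [AddCommGroup M] [Module S M]
    (j₀ : Fin r) (G : Finset (Fin r) → M) (s : Finset (Fin r)) :
    hop S j₀ G s = if j₀ ∈ s then 0 else sgn (R := S) s j₀ • G (insert j₀ s) := rfl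

lemma kD_hop (x : Fin r → R) (j₀ : Fin r) (G : Finset (Fin r) → M) (t : Finset (Fin r)) :
    kD x (hop R j₀ G) t + hop R j₀ (fun s => kD x G s) t = x j₀ • G t := by
  classical
  by_cases hj : j₀ ∈ t
  · rw [hop_apply, if_pos hj, add_zero]
    unfold kD
    rw [Finset.sum_eq_single_of_mem j₀ hj (fun b hb hbne => by
      rw [hop_apply, if_pos (Finset.mem_erase.2 ⟨fun h => hbne h.symm, hj⟩), smul_zero])]
    rw [hop_apply, if_neg (Finset.notMem_erase _ _), Finset.insert_erase hj,
      sgn_erase_of_not_lt (lt_irrefl j₀), smul_smul]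
    congr 1
    have hs := sgn_mul_self (R := R) t j₀
    linear_combination x j₀ * hs
  · rw [hop_apply, if_neg hj]
    unfold kD
    rw [Finset.sum_insert hj, Finset.erase_insert hj, sgn_insert_of_not_lt (lt_irrefl j₀),
      smul_add, smul_smul]
    have hcoef : sgn (R := R) t j₀ * (sgn t j₀ * x j₀) = x j₀ := by
      have hs := sgn_mul_self (R := R) t j₀
      linear_combination x j₀ * hs
    rw [hcoef]
    have hrest : ∑ k ∈ t, (sgn t k * x k) • hop R j₀ G (t.erase k)
        + sgn (R := R) t j₀ • ∑ k ∈ t, (sgn (insert j₀ t) k * x k) • G ((insert j₀ t).erase k)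
        = 0 := by
      rw [Finset.smul_sum, ← Finset.sum_add_distrib]
      refine Finset.sum_eq_zero fun k hk => ?_
      have hkj : j₀ ≠ k := fun h => hj (h ▸ hk)
      rw [hop_apply, if_neg (fun h => hj (Finset.mem_of_mem_erase h)),
        Finset.erase_insert_of_ne hkj, smul_smul, smul_smul, ← add_smul]
      convert zero_smul R _
      rcases lt_or_gt_of_ne hkj with hlt | hlt
      · -- j₀ < k
        have h1 : sgn (R := R) (t.erase k) j₀ = sgn t j₀ := sgn_erase_of_not_lt (asymm hlt)
        have h2 : sgn (R := R) (insert j₀ t) k = - sgn t k := sgn_insert_of_lt hj hlt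
        rw [h1, h2]; ring
      · -- k < j₀
        have h1 : sgn (R := R) (t.erase k) j₀ = - sgn t j₀ := by
          rw [sgn_erase_of_lt hk hlt]; ring
        have h2 : sgn (R := R) (insert j₀ t) k = sgn t k := sgn_insert_of_not_lt (asymm hlt)
        rw [h1, h2]; ring
    rw [← add_assoc, add_comm (∑ k ∈ t, _) (x j₀ • G t), add_assoc, hrest, add_zero]


section Bridge

variable (x : Fin r → R) (M : Type u) [AddCommGroup M] [Module R M]

/-- Extend a degree-`i` cochain to a total function on finsets. -/
def liftC {i : ℕ} (φ : {s : Finset (Fin r) // s.card = i} → M) : Finset (Fin r) → M :=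
  fun s => if h : s.card = i then φ ⟨s, h⟩ else 0

def liftCIn {i : ℕ} (φ : {s : Finset (Fin r) // s.card + 1 = i} → M) : Finset (Fin r) → M :=
  fun s => if h : s.card + 1 = i then φ ⟨s, h⟩ else 0

lemma liftC_eq {i : ℕ} (φ : {s : Finset (Fin r) // s.card = i} → M) {s : Finset (Fin r)}
    (h : s.card = i) : liftC M φ s = φ ⟨s, h⟩ := dif_pos h

lemma liftCIn_eq {i : ℕ} (φ : {s : Finset (Fin r) // s.card + 1 = i} → M) {s : Finset (Fin r)}
    (h : s.card + 1 = i) : liftCIn M φ s = φ ⟨s, h⟩ := dif_pos h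

lemma koszulDiff_apply_eq {i : ℕ} (φ : {s : Finset (Fin r) // s.card = i} → M)
    (t : {s : Finset (Fin r) // s.card = i + 1}) :
    koszulDiff x M i φ t = kD x (liftC M φ) t.1 := by
  simp only [koszulDiff, LinearMap.coe_mk, AddHom.coe_mk]
  rw [kD, ← Finset.sum_attach t.1 (fun a => (sgn (R := R) t.1 a * x a) • liftC M φ (t.1.erase a))]
  refine Finset.sum_congr rfl fun j _ => ?_
  rw [liftC_eq M φ (by simp [Finset.card_erase_of_mem j.2, t.2])]
  rfl

lemma koszulDiffIn_apply_eq {i : ℕ} (φ : {s : Finset (Fin r) // s.card + 1 = i} → M)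
    (t : {s : Finset (Fin r) // s.card = i}) :
    koszulDiffIn x M i φ t = kD x (liftCIn M φ) t.1 := by
  simp only [koszulDiffIn, LinearMap.coe_mk, AddHom.coe_mk]
  rw [kD, ← Finset.sum_attach t.1 (fun a => (sgn (R := R) t.1 a * x a) • liftCIn M φ (t.1.erase a))]
  refine Finset.sum_congr rfl fun j _ => ?_
  rw [liftCIn_eq M φ (by rw [Finset.card_erase_add_one j.2]; exact t.2)]
  rfl

lemma koszulDiff_koszulDiff {i : ℕ} (φ : {s : Finset (Fin r) // s.card = i} → M) :
    koszulDiff x M (i + 1) (koszulDiff x M i φ) = 0 := by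
  funext t
  rw [koszulDiff_apply_eq]
  have hcongr : kD x (liftC M (koszulDiff x M i φ)) t.1
      = kD x (fun s => kD x (liftC M φ) s) t.1 := by
    refine kD_congr fun j hj => ?_
    have hcard : (t.1.erase j).card = i + 1 := by simp [Finset.card_erase_of_mem hj, t.2]
    rw [liftC_eq M _ hcard, koszulDiff_apply_eq]
  rw [hcongr, kD_kD]
  rfl

lemma koszulDiff_koszulDiffIn {i : ℕ} (ρ : {s : Finset (Fin r) // s.card + 1 = i} → M) :
    koszulDiff x M i (koszulDiffIn x M i ρ) = 0 := by
  funext t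
  rw [koszulDiff_apply_eq]
  have hcongr : kD x (liftC M (koszulDiffIn x M i ρ)) t.1
      = kD x (fun s => kD x (liftCIn M ρ) s) t.1 := by
    refine kD_congr fun j hj => ?_
    have hcard : (t.1.erase j).card = i := by simp [Finset.card_erase_of_mem hj, t.2]
    rw [liftC_eq M _ hcard, koszulDiffIn_apply_eq]
  rw [hcongr, kD_kD]
  rfl

lemma koszulDiff_eq_koszulDiffIn {i : ℕ} (σ : {s : Finset (Fin r) // s.card = i} → M) :
    koszulDiff x M i σ
      = koszulDiffIn x M (i + 1) (fun t => σ ⟨t.1, Nat.succ_injective t.2⟩) := by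
  funext t
  rw [koszulDiff_apply_eq, koszulDiffIn_apply_eq]
  refine kD_congr fun j hj => ?_
  have hcard : (t.1.erase j).card = i := by simp [Finset.card_erase_of_mem hj, t.2]
  rw [liftC_eq M _ hcard, liftCIn_eq M _ (by omega)]

lemma koszulDiff_natural {M' : Type u} [AddCommGroup M'] [Module R M'] (f : M →ₗ[R] M')
    {i : ℕ} (φ : {s : Finset (Fin r) // s.card = i} → M) :
    koszulDiff x M' i (fun t => f (φ t)) = fun t => f (koszulDiff x M i φ t) := by
  funext t
  simp only [koszulDiff, LinearMap.coe_mk, AddHom.coe_mk, map_sum, map_smul]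

lemma koszulDiffIn_natural {M' : Type u} [AddCommGroup M'] [Module R M'] (f : M →ₗ[R] M')
    {i : ℕ} (φ : {s : Finset (Fin r) // s.card + 1 = i} → M) :
    koszulDiffIn x M' i (fun t => f (φ t)) = fun t => f (koszulDiffIn x M i φ t) := by
  funext t
  simp only [koszulDiffIn, LinearMap.coe_mk, AddHom.coe_mk, map_sum, map_smul]

lemma kD_sum {ι : Type*} (u : Finset ι) (G : ι → Finset (Fin r) → M) (t : Finset (Fin r)) :
    kD x (fun s => ∑ j ∈ u, G j s) t = ∑ j ∈ u, kD x (G j) t := by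
  unfold kD
  rw [Finset.sum_comm]
  exact Finset.sum_congr rfl fun k _ => Finset.smul_sum

lemma kD_smul (c : R) (G : Finset (Fin r) → M) (t : Finset (Fin r)) :
    kD x (fun s => c • G s) t = c • kD x G t := by
  unfold kD
  rw [Finset.smul_sum]
  exact Finset.sum_congr rfl fun k _ => smul_comm _ c _

/-- Multiplication by an element of the ideal is null-homotopic on cocycles. -/
lemma exists_htpy {x₀ : R} (hx : x₀ ∈ Ideal.span (Set.range x)) {i : ℕ}
    (φ : {s : Finset (Fin r) // s.card = i} → M) (hφ : koszulDiff x M i φ = 0) :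
    ∃ Ψ : {s : Finset (Fin r) // s.card + 1 = i} → M,
      koszulDiffIn x M i Ψ = x₀ • φ := by
  classical
  obtain ⟨c, hc⟩ := (Submodule.mem_span_range_iff_exists_fun R).1 hx
  refine ⟨fun t => ∑ j : Fin r, c j • hop R j (liftC M φ) t.1, ?_⟩
  funext t
  rw [koszulDiffIn_apply_eq]
  have hcongr : kD x (liftCIn M (i := i)
        (fun t : {s : Finset (Fin r) // s.card + 1 = i} =>
          ∑ j : Fin r, c j • hop R j (liftC M φ) t.1)) t.1
      = kD x (fun s => ∑ j : Fin r, c j • hop R j (liftC M φ) s) t.1 := by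
    refine kD_congr fun k hk => ?_
    rw [liftCIn_eq M _ (by rw [Finset.card_erase_add_one hk]; exact t.2)]
  rw [hcongr, kD_sum]
  have hterm : ∀ j : Fin r, kD x (fun s => c j • hop R j (liftC M φ) s) t.1
      = (c j * x j) • φ t := by
    intro j
    rw [kD_smul]
    have hzero : hop R j (fun s => kD x (liftC M φ) s) t.1 = 0 := by
      rw [hop_apply]
      split
      · rfl
      · have : kD x (liftC M φ) (insert j t.1) = 0 := by
          have hcard : (insert j t.1).card = i + 1 := by
            rw [Finset.card_insert_of_notMem (by assumption), t.2]
          rw [← koszulDiff_apply_eq x M φ ⟨insert j t.1, hcard⟩, hφ]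
          rfl
        rw [this, smul_zero]
    have hh := kD_hop x j (liftC M φ) t.1
    rw [hzero, add_zero] at hh
    rw [hh, liftC_eq M φ t.2, smul_smul]
  have : ∑ j : Fin r, kD x (fun s => c j • hop R j (liftC M φ) s) t.1
      = ∑ j : Fin r, (c j * x j) • φ t := Finset.sum_congr rfl fun j _ => hterm j
  rw [this, ← Finset.sum_smul]
  have hsum : ∑ j : Fin r, c j * x j = x₀ := by
    rw [← hc]
    exact Finset.sum_congr rfl fun j _ => (smul_eq_mul (c j) (x j)).symm
  rw [hsum]
  rfl

end Bridge

end KZ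


section Main

open TT KZ

variable {T : Set (ModuleCat.{u} R)}

lemma image_lt_succ {n : ℕ} (x : Fin (n + 1) → R) (i : Fin n) :
    x '' {j : Fin (n + 1) | j < i.succ}
      = {x 0} ∪ (fun j : Fin n => x j.succ) '' {j : Fin n | j < i} := by
  ext z
  simp only [Set.mem_image, Set.mem_union, Set.mem_singleton_iff, Set.mem_setOf_eq]
  constructor
  · rintro ⟨j, hj, rfl⟩
    rcases Fin.eq_zero_or_eq_succ j with h0 | ⟨k, rfl⟩
    · left; rw [h0]
    · right; exact ⟨k, by rwa [Fin.succ_lt_succ_iff] at hj, rfl⟩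
  · rintro (rfl | ⟨k, hk, rfl⟩)
    · exact ⟨0, Fin.succ_pos i, rfl⟩
    · exact ⟨k.succ, Fin.succ_lt_succ_iff.2 hk, rfl⟩

lemma exists_of_mem_span_singleton_smul {M : Type u} [AddCommGroup M] [Module R M]
    (x₀ : R) (m : M) (h : m ∈ Ideal.span {x₀} • (⊤ : Submodule R M)) : ∃ u, m = x₀ • u := by
  refine Submodule.smul_induction_on h ?_ ?_
  · intro a ha n _
    obtain ⟨c, rfl⟩ := Ideal.mem_span_singleton'.1 ha
    exact ⟨c • n, by rw [smul_smul, mul_comm]⟩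
  · rintro m1 m2 ⟨u1, rfl⟩ ⟨u2, rfl⟩
    exact ⟨u1 + u2, (smul_add _ _ _).symm⟩


lemma ker_memT_of_bot (hT : IsTorsionTheory R T) {M : Type u} [AddCommGroup M] [Module R M]
    (f : M →ₗ[R] M) (p : Submodule R M) (hp : p = ⊥)
    (h : ModuleCat.of R ↥(Submodule.map p.mkQ (Submodule.comap f p)) ∈ T) :
    ModuleCat.of R ↥(LinearMap.ker f) ∈ T := by
  subst hp
  have hinj : Function.Injective (Submodule.mkQ (⊥ : Submodule R M)) := by
    rw [← LinearMap.ker_eq_bot, Submodule.ker_mkQ]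
  have e := Submodule.equivMapOfInjective _ hinj (Submodule.comap f ⊥)
  exact TT.memT_of_equiv hT e.symm h

/-- A weak regular sequence with respect to `𝔗` induces one on the quotient by the first
element. -/
lemma weakreg_quot (hT : IsTorsionTheory R T) {n : ℕ} (x : Fin (n + 1) → R)
    (M : Type u) [AddCommGroup M] [Module R M] (hreg : IsWeakRegularSeqWrt T x M) :
    IsWeakRegularSeqWrt T (fun j : Fin n => x j.succ)
      (M ⧸ (Ideal.span {x 0} • (⊤ : Submodule R M))) := by
  intro i
  set B : Submodule R M := Ideal.span {x 0} • ⊤ with hB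
  set I' : Ideal R := Ideal.span ((fun j : Fin n => x j.succ) '' {j | j < i}) with hI'
  set A : Submodule R M := Ideal.span (x '' {j | j < i.succ}) • ⊤ with hA
  set c : R := x i.succ with hc
  have hAsup : A = B ⊔ I' • ⊤ := by
    rw [hA, image_lt_succ, Ideal.span_union, Submodule.sup_smul, hB, hI']
  have hBA : B ≤ A := hAsup ▸ le_sup_left
  have hmapB : Submodule.map B.mkQ B = ⊥ := by
    rw [← le_bot_iff, Submodule.map_le_iff_le_comap]
    intro m hm
    simp only [Submodule.mem_comap, Submodule.mem_bot, Submodule.mkQ_apply,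
      Submodule.Quotient.mk_eq_zero]
    exact hm
  have hC : (I' • (⊤ : Submodule R (M ⧸ B))) = Submodule.map B.mkQ A := by
    rw [hAsup, Submodule.map_sup, hmapB, bot_sup_eq, Submodule.map_smul'', Submodule.map_top,
      Submodule.range_mkQ]
  set e : ((M ⧸ B) ⧸ (I' • (⊤ : Submodule R (M ⧸ B)))) ≃ₗ[R] (M ⧸ A) :=
    (Submodule.quotEquivOfEq _ _ hC).trans (Submodule.quotientQuotientEquivQuotient B A hBA)
    with he
  set SM := Submodule.comap (LinearMap.lsmul R M c) A with hSM
  have hSQ : Submodule.comap (LinearMap.lsmul R (M ⧸ B) c) (I' • (⊤ : Submodule R (M ⧸ B)))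
      = Submodule.map B.mkQ SM := by
    ext q
    simp only [Submodule.mem_comap, LinearMap.lsmul_apply, Submodule.mem_map, hSM]
    constructor
    · intro hq
      obtain ⟨m, rfl⟩ := Submodule.mkQ_surjective B q
      have h1 : B.mkQ (c • m) ∈ I' • (⊤ : Submodule R (M ⧸ B)) := by
        rw [map_smul]; exact hq
      rw [hC] at h1
      have h2 : c • m ∈ Submodule.comap B.mkQ (Submodule.map B.mkQ A) := h1
      rw [Submodule.comap_map_eq, Submodule.ker_mkQ, sup_eq_left.2 hBA] at h2
      exact ⟨m, h2, rfl⟩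
    · rintro ⟨m, hm, rfl⟩
      have : B.mkQ (c • m) ∈ I' • (⊤ : Submodule R (M ⧸ B)) := by
        rw [hC]; exact Submodule.mem_map_of_mem hm
      rwa [map_smul] at this
  have hmain := hreg i.succ
  have hcomp : ((e : ((M ⧸ B) ⧸ (I' • (⊤ : Submodule R (M ⧸ B)))) →ₗ[R] (M ⧸ A)).comp
      (I' • (⊤ : Submodule R (M ⧸ B))).mkQ).comp B.mkQ = A.mkQ := by
    apply LinearMap.ext
    intro m
    simp only [LinearMap.comp_apply, LinearEquiv.coe_coe, he, LinearEquiv.trans_apply,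
      Submodule.mkQ_apply, Submodule.quotEquivOfEq_mk]
    exact Submodule.quotientQuotientEquivQuotientAux_mk_mk B A hBA m
  have himage : Submodule.map (e : _ →ₗ[R] _)
      (Submodule.map (I' • (⊤ : Submodule R (M ⧸ B))).mkQ
        (Submodule.comap (LinearMap.lsmul R (M ⧸ B) c) (I' • (⊤ : Submodule R (M ⧸ B)))))
      = Submodule.map A.mkQ SM := by
    rw [hSQ, ← Submodule.map_comp, ← Submodule.map_comp, hcomp]
  have e2 := e.submoduleMap (Submodule.map (I' • (⊤ : Submodule R (M ⧸ B))).mkQ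
      (Submodule.comap (LinearMap.lsmul R (M ⧸ B) c) (I' • (⊤ : Submodule R (M ⧸ B)))))
  rw [himage] at e2
  exact TT.memT_of_equiv hT e2.symm hmain

/-- Main lemma: a weak `M`-regular sequence of length `n` inside the ideal forces the first `n`
Koszul cohomologies to be torsion. -/
lemma main_lemma (hT : IsTorsionTheory R T) {r : ℕ} (y : Fin r → R) :
    ∀ n : ℕ, ∀ (M : Type u) (_ : AddCommGroup M) (_ : Module R M),
      ∀ x : Fin n → R, (∀ j, x j ∈ Ideal.span (Set.range y)) →
      IsWeakRegularSeqWrt T x M → ∀ i : ℕ, i < n →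
      ModuleCat.of R (koszulCohomology y M i) ∈ T := by
  intro n
  induction n with
  | zero => intro M _ _ x _ _ i hi; omega
  | succ n ih =>
    intro M _ _ x hx hreg i hi
    classical
    -- Step 1 : the annihilator of x₀ is torsion
    have hK : ModuleCat.of R ↥(LinearMap.ker (LinearMap.lsmul R M (x 0))) ∈ T := by
      have h0 := hreg 0
      refine ker_memT_of_bot hT (LinearMap.lsmul R M (x 0))
        (Ideal.span (x '' {j : Fin (n + 1) | j < 0}) • ⊤) ?_ h0
      have hempty : x '' {j : Fin (n + 1) | j < 0} = (∅ : Set R) := by simp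
      rw [hempty, Ideal.span_empty, Submodule.bot_smul]
    have hne : T.Nonempty := ⟨_, hK⟩
    rcases Nat.eq_zero_or_eq_succ_pred i with hi0 | him
    · -- degree 0
      subst hi0
      rw [TT.memT_iff_forall_tors hT]
      intro z
      obtain ⟨w, rfl⟩ := Submodule.Quotient.mk_surjective _ z
      have hφ : koszulDiff y M 0 w.1 = 0 := LinearMap.mem_ker.1 w.2
      obtain ⟨Ψ, hΨ⟩ := exists_htpy y M (hx 0) w.1 hφ
      have hdIn0 : koszulDiffIn y M 0 Ψ = 0 := by
        funext t
        have hat : (t.1).attach = ∅ :=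
          Finset.card_eq_zero.1 (by rw [Finset.card_attach, t.2])
        simp only [koszulDiffIn, LinearMap.coe_mk, AddHom.coe_mk]
        rw [hat, Finset.sum_empty]
        rfl
      have hzero : x 0 • w.1 = 0 := by rw [← hΨ, hdIn0]
      have htorsφ : TT.Tors T w.1 := by
        refine TT.tors_pi hT hne (ι := {s : Finset (Fin r) // s.card = 0}) (N := M)
          w.1 fun t => ?_
        refine TT.tors_of_mem hT hK ?_
        rw [LinearMap.mem_ker, LinearMap.lsmul_apply]
        have := congrFun hzero t
        simpa using this
      have htorsw : TT.Tors T w :=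
        TT.tors_of_injective hT (Submodule.injective_subtype _) htorsφ
      exact TT.tors_of_map hT (Submodule.mkQ _) htorsw
    · -- degree m + 1
      obtain ⟨m, rfl⟩ : ∃ m, i = m + 1 := ⟨i - 1, him⟩
      have hmn : m < n := by omega
      set B : Submodule R M := Ideal.span {x 0} • ⊤ with hB
      set Q := M ⧸ B with hQ
      have hregQ : IsWeakRegularSeqWrt T (fun j : Fin n => x j.succ) Q :=
        weakreg_quot hT x M hreg
      have ihQ : ModuleCat.of R (koszulCohomology y Q m) ∈ T :=
        ih Q _ _ (fun j : Fin n => x j.succ) (fun j => hx j.succ) hregQ m hmn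
      rw [TT.memT_iff_forall_tors hT]
      intro z
      obtain ⟨w, rfl⟩ := Submodule.Quotient.mk_surjective _ z
      have hφ : koszulDiff y M (m + 1) w.1 = 0 := LinearMap.mem_ker.1 w.2
      set φ := w.1 with hφdef
      obtain ⟨Ψ, hΨ⟩ := exists_htpy y M (hx 0) φ hφ
      set ψ : {s : Finset (Fin r) // s.card = m} → M :=
        fun s => Ψ ⟨s.1, by omega⟩ with hψdef
      have hψd : koszulDiff y M m ψ = x 0 • φ := by
        rw [koszulDiff_eq_koszulDiffIn]
        have : (fun t : {s : Finset (Fin r) // s.card + 1 = m + 1} =>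
            ψ ⟨t.1, Nat.succ_injective t.2⟩) = Ψ := by
          funext t; rfl
        rw [this, hΨ]
      set ψb : {s : Finset (Fin r) // s.card = m} → Q := fun t => B.mkQ (ψ t) with hψbdef
      have hψbd : koszulDiff y Q m ψb = 0 := by
        rw [hψbdef, koszulDiff_natural, hψd]
        funext t
        simp only [Pi.smul_apply, Pi.zero_apply, map_smul]
        rw [← map_smul, Submodule.mkQ_apply, Submodule.Quotient.mk_eq_zero]
        exact Submodule.smul_mem_smul (Submodule.mem_span_singleton_self (x 0)) Submodule.mem_top
      set wQ : ↥(LinearMap.ker (koszulDiff y Q m)) := ⟨ψb, LinearMap.mem_ker.2 hψbd⟩ with hwQ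
      set zQ : koszulCohomology y Q m := Submodule.Quotient.mk wQ with hzQ
      have htorszQ : TT.Tors T zQ := (TT.memT_iff_forall_tors hT).1 ihQ zQ
      set J : Ideal R := LinearMap.ker (LinearMap.toSpanSingleton R _ zQ) with hJ
      have hRJ : ModuleCat.of R (R ⧸ J) ∈ T := by
        have h1 : ModuleCat.of R ↥(LinearMap.range (LinearMap.toSpanSingleton R _ zQ)) ∈ T := by
          have := htorszQ
          rwa [TT.Tors, LinearMap.span_singleton_eq_range] at this
        exact TT.memT_of_equiv hT (LinearMap.quotKerEquivRange _).symm h1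
      -- key claim : multiples by elements of J are torsion
      have key : ∀ cJ ∈ J, TT.Tors T (cJ • (Submodule.Quotient.mk w :
          koszulCohomology y M (m + 1))) := by
        intro cJ hcJ
        have h1 : cJ • zQ = 0 := by
          have := LinearMap.mem_ker.1 hcJ
          rwa [LinearMap.toSpanSingleton_apply] at this
        have h2 : cJ • ψb ∈ LinearMap.range (koszulDiffIn y Q m) := by
          rw [hzQ, ← Submodule.Quotient.mk_smul, Submodule.Quotient.mk_eq_zero] at h1
          exact h1
        obtain ⟨ρb, hρb⟩ := h2
        set ρ : {s : Finset (Fin r) // s.card + 1 = m} → M :=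
          fun t => (Submodule.Quotient.mk_surjective B (ρb t)).choose with hρdef
        have hρ : ∀ t, B.mkQ (ρ t) = ρb t :=
          fun t => (Submodule.Quotient.mk_surjective B (ρb t)).choose_spec
        set ψ' : {s : Finset (Fin r) // s.card = m} → M :=
          fun t => cJ • ψ t - koszulDiffIn y M m ρ t with hψ'def
        have hψ'0 : ∀ t, ψ' t ∈ B := by
          intro t
          have hnat : koszulDiffIn y Q m (fun t => B.mkQ (ρ t))
              = fun t => B.mkQ (koszulDiffIn y M m ρ t) := koszulDiffIn_natural y M B.mkQ ρ
          have hfun : (fun t => B.mkQ (ρ t)) = ρb := funext hρ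
          rw [hfun, hρb] at hnat
          have := congrFun hnat t
          simp only [Pi.smul_apply] at this
          rw [← Submodule.Quotient.mk_eq_zero, ← Submodule.mkQ_apply, map_sub, map_smul]
          rw [hψbdef] at this
          rw [← this]
          simp
        have hσex : ∀ t, ∃ u, ψ' t = x 0 • u := fun t =>
          exists_of_mem_span_singleton_smul (x 0) (ψ' t) (hψ'0 t)
        set σ : {s : Finset (Fin r) // s.card = m} → M :=
          fun t => (hσex t).choose with hσdef
        have hσ : ∀ t, ψ' t = x 0 • σ t := fun t => (hσex t).choose_spec
        have hdψ' : koszulDiff y M m ψ' = (cJ * x 0) • φ := by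
          have : ψ' = cJ • ψ - koszulDiffIn y M m ρ := by
            funext t; rfl
          rw [this, map_sub, map_smul, hψd]
          rw [show (koszulDiff y M m) ((koszulDiffIn y M m) ρ) = 0 from
            koszulDiff_koszulDiffIn y M ρ]
          rw [smul_smul, sub_zero]
        have hxσ : x 0 • koszulDiff y M m σ = (cJ * x 0) • φ := by
          have hfn : ψ' = x 0 • σ := funext hσ
          rw [← map_smul, ← hfn, hdψ']
        set κ : {s : Finset (Fin r) // s.card = m + 1} → M :=
          koszulDiff y M m σ - cJ • φ with hκdef
        have hκK : ∀ t, κ t ∈ LinearMap.ker (LinearMap.lsmul R M (x 0)) := by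
          intro t
          rw [LinearMap.mem_ker, LinearMap.lsmul_apply]
          have h3 := congrFun hxσ t
          simp only [Pi.smul_apply] at h3
          show x 0 • (((koszulDiff y M m) σ - cJ • φ) t) = 0
          simp only [Pi.sub_apply, Pi.smul_apply, smul_sub]
          rw [h3, smul_smul, mul_comm (x 0) cJ, sub_self]
        have hκZ : koszulDiff y M (m + 1) κ = 0 := by
          rw [hκdef, map_sub, map_smul, koszulDiff_koszulDiff, hφ]
          simp
        have hdσZ : koszulDiff y M (m + 1) (koszulDiff y M m σ) = 0 :=
          koszulDiff_koszulDiff y M σ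
        set wκ : ↥(LinearMap.ker (koszulDiff y M (m + 1))) := ⟨κ, LinearMap.mem_ker.2 hκZ⟩
        set wdσ : ↥(LinearMap.ker (koszulDiff y M (m + 1))) :=
          ⟨koszulDiff y M m σ, LinearMap.mem_ker.2 hdσZ⟩ with hwdσ
        have hwsum : wdσ = wκ + cJ • w := by
          apply Subtype.ext
          show koszulDiff y M m σ = κ + cJ • φ
          rw [hκdef]
          abel
        have hmkdσ : (Submodule.Quotient.mk wdσ : koszulCohomology y M (m + 1)) = 0 := by
          rw [Submodule.Quotient.mk_eq_zero]
          show (LinearMap.ker (koszulDiff y M (m+1))).subtype wdσ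
            ∈ LinearMap.range (koszulDiffIn y M (m + 1))
          refine ⟨fun t => σ ⟨t.1, Nat.succ_injective t.2⟩, ?_⟩
          exact (koszulDiff_eq_koszulDiffIn y M σ).symm
        have htorsκ : TT.Tors T (Submodule.Quotient.mk wκ : koszulCohomology y M (m + 1)) := by
          refine TT.tors_of_map hT (Submodule.mkQ _) ?_
          refine TT.tors_of_injective hT (Submodule.injective_subtype _) ?_
          exact TT.tors_pi hT hne κ fun t => TT.tors_of_mem hT hK (hκK t)
        have heq : cJ • (Submodule.Quotient.mk w : koszulCohomology y M (m + 1))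
            = - Submodule.Quotient.mk wκ := by
          have : (Submodule.Quotient.mk (wκ + cJ • w) : koszulCohomology y M (m + 1)) = 0 := by
            rw [← hwsum]; exact hmkdσ
          rw [Submodule.Quotient.mk_add, Submodule.Quotient.mk_smul] at this
          exact eq_neg_of_add_eq_zero_right this
        rw [heq]
        exact TT.tors_neg hT htorsκ
      -- conclude with the cyclic-module argument
      exact tors_of_ideal hT (Submodule.Quotient.mk w) J hRJ key

end Main

/-- **Theorem (classical grade ≤ Koszul grade).** Let `𝔗` be a torsion theory, `𝔞` a
finitely generated ideal of `R` (generated by `y₁, …, y_r`) and `M` an `R`-module. Then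
`𝔗-cgrade_R(𝔞, M) ≤ 𝔗-Kgrade_R(𝔞, M)`: the length of any weak `M`-regular sequence with
respect to `𝔗` consisting of elements of `𝔞` is at most `𝔗-Kgrade_R(𝔞, M)`. -/
theorem tcgrade_le_tKgrade (T : Set (ModuleCat.{u} R)) (hT : IsTorsionTheory R T)
    (a : Ideal R) (M : Type u) [AddCommGroup M] [Module R M]
    {r : ℕ} (y : Fin r → R) (hy : Ideal.span (Set.range y) = a) :
    Tcgrade T a M ≤ TKgrade T y M := by
  refine sSup_le ?_
  rintro b ⟨n, hn, rfl⟩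
  obtain ⟨x, hxa, hreg⟩ := hn
  refine le_sInf ?_
  rintro b ⟨i, hi, rfl⟩
  by_contra hlt
  push_neg at hlt
  have hin : i < n := by exact_mod_cast hlt
  exact hi (main_lemma hT y n M inferInstance inferInstance x
    (fun j => hy.symm ▸ hxa j) hreg i hin)
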